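/- arXiv:2410.22338 — 4 statements merged into one kernel-verified Lean document; each statement's English description precedes it below -/
import Mathlib

section
/- For every positive integer n, the improper integral over t ∈ (0, ∞) of (1/t)·(2nπ/(t² + 4n²π²) − e^{−t}/(2nπ)) equals (1/(2nπ))·(γ + log(2π) + log n), where γ is the Euler–Mascheroni constant. -/
open Real MeasureTheory Set Filter Topology Asymptotics

lemma integral_log_mul_exp_neg :
    (∫ t in Ioi (0:ℝ), Real.log t * Real.exp (-t)) = -Real.eulerMascheroniConstant := by
  have h1 := Complex.hasDerivAt_GammaIntegral (s := (1:ℂ)) (by norm_num)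
  have heq : Complex.Gamma =ᶠ[𝓝 (1:ℂ)] Complex.GammaIntegral := by
    filter_upwards [IsOpen.mem_nhds (isOpen_lt continuous_const Complex.continuous_re)
      (by norm_num : (0:ℝ) < (1:ℂ).re)] with s hs
    exact Complex.Gamma_eq_integral hs
  have h2 : HasDerivAt Complex.GammaIntegral (-(Real.eulerMascheroniConstant : ℂ)) 1 :=
    Complex.hasDerivAt_Gamma_one.congr_of_eventuallyEq heq.symm
  have h3 := h1.unique h2
  simp only [sub_self, Complex.cpow_zero, one_mul] at h3
  set I : ℝ := ∫ t in Ioi (0:ℝ), Real.log t * Real.exp (-t) with hI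
  have h4 : (∫ t in Ioi (0:ℝ), ((Real.log t : ℂ) * (Real.exp (-t) : ℂ))) = (I : ℂ) := by
    exact (integral_congr_ae (Filter.Eventually.of_forall fun t =>
      (Complex.ofReal_mul _ _).symm)).trans integral_ofReal
  rw [h4] at h3
  exact_mod_cast h3

lemma integrableOn_log_mul_exp_neg :
    IntegrableOn (fun t : ℝ => Real.log t * Real.exp (-t)) (Ioi 0) := by
  have h := (mellin_hasDerivAt_of_isBigO_rpow (E := ℂ) (a := 2) (b := 0)
      (f := fun t : ℝ => (Real.exp (-t) : ℂ)) (s := 1) ?_ ?_ ?_ ?_ ?_).1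
  · have h' : IntegrableOn (fun t : ℝ => ((Real.log t * Real.exp (-t) : ℝ) : ℂ)) (Ioi 0) := by
      refine h.congr_fun (fun t ht => ?_) measurableSet_Ioi
      simp [Complex.cpow_zero, Complex.ofReal_mul, smul_eq_mul]
    have := h'.re
    refine this.congr (ae_of_all _ fun t => ?_)
    exact RCLike.ofReal_re _
  · refine (Continuous.continuousOn ?_).locallyIntegrableOn measurableSet_Ioi
    exact Complex.continuous_ofReal.comp (Real.continuous_exp.comp continuous_neg)
  · rw [← isBigO_norm_left]
    simp_rw [Complex.norm_real, isBigO_norm_left]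
    simpa only [neg_one_mul] using (isLittleO_exp_neg_mul_rpow_atTop zero_lt_one _).isBigO
  · norm_num
  · simp_rw [neg_zero, Real.rpow_zero]
    refine Asymptotics.isBigO_const_of_tendsto (?_ : Tendsto _ _ (𝓝 (1 : ℂ))) one_ne_zero
    rw [(by simp : (1 : ℂ) = Real.exp (-0))]
    exact (Complex.continuous_ofReal.comp
      (Real.continuous_exp.comp continuous_neg)).continuousWithinAt
  · norm_num

lemma integrableOn_exp_neg_div (ε : ℝ) (hε : 0 < ε) :
    IntegrableOn (fun t : ℝ => Real.exp (-t) / t) (Ioi ε) := by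
  have hbd : IntegrableOn (fun t : ℝ => Real.exp (-t) / ε) (Ioi ε) := by
    have := (exp_neg_integrableOn_Ioi ε (one_pos)).div_const ε
    refine this.congr (ae_of_all _ fun x => by norm_num)
  refine hbd.mono' ?_ ?_
  · refine (ContinuousOn.div ?_ ?_ ?_).aestronglyMeasurable measurableSet_Ioi
    · exact (Real.continuous_exp.comp continuous_neg).continuousOn
    · exact continuous_id.continuousOn
    · exact fun t ht => ne_of_gt (hε.trans ht)
  · filter_upwards [ae_restrict_mem measurableSet_Ioi] with t ht
    rw [Real.norm_eq_abs, abs_div, abs_of_pos (Real.exp_pos _), abs_of_pos (hε.trans ht)]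
    exact div_le_div_of_nonneg_left (Real.exp_pos _).le hε ht.le

lemma ibp_exp_div (ε : ℝ) (hε : 0 < ε) :
    (∫ t in Ioi ε, Real.exp (-t) / t)
      = -(Real.exp (-ε) * Real.log ε) + ∫ t in Ioi ε, Real.log t * Real.exp (-t) := by
  have hint2 : IntegrableOn (fun t : ℝ => Real.log t * Real.exp (-t)) (Ioi ε) :=
    integrableOn_log_mul_exp_neg.mono_set (Ioi_subset_Ioi hε.le)
  have hderiv : ∀ x ∈ Ici ε, HasDerivAt (fun t : ℝ => Real.exp (-t) * Real.log t)
      (Real.exp (-x) / x - Real.log x * Real.exp (-x)) x := by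
    intro x hx
    have hx0 : (0:ℝ) < x := lt_of_lt_of_le hε hx
    have h1 : HasDerivAt (fun t : ℝ => Real.exp (-t)) (-Real.exp (-x)) x := by
      simpa using ((hasDerivAt_neg x).exp)
    have h2 : HasDerivAt Real.log (1/x) x := by
      simpa [one_div] using Real.hasDerivAt_log hx0.ne'
    have : HasDerivAt (fun t : ℝ => Real.exp (-t) * Real.log t)
        (-Real.exp (-x) * Real.log x + Real.exp (-x) * (1/x)) x := h1.mul h2
    convert this using 1
    field_simp
    ring
  have htend : Tendsto (fun t : ℝ => Real.exp (-t) * Real.log t) atTop (𝓝 0) := by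
    have hb : Tendsto (fun t : ℝ => t * Real.exp (-t)) atTop (𝓝 0) := by
      simpa using tendsto_pow_mul_exp_neg_atTop_nhds_zero 1
    refine squeeze_zero_norm' ?_ hb
    filter_upwards [eventually_ge_atTop (1:ℝ)] with t ht
    rw [Real.norm_eq_abs, abs_mul, abs_of_pos (Real.exp_pos _),
      abs_of_nonneg (Real.log_nonneg ht)]
    have hlt : Real.log t ≤ t := (Real.log_le_sub_one_of_pos (by linarith)).trans (by linarith)
    calc Real.exp (-t) * Real.log t ≤ Real.exp (-t) * t :=
          mul_le_mul_of_nonneg_left hlt (Real.exp_pos _).le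
      _ = t * Real.exp (-t) := by ring
  have hdint : IntegrableOn
      (fun x : ℝ => Real.exp (-x) / x - Real.log x * Real.exp (-x)) (Ioi ε) :=
    (integrableOn_exp_neg_div ε hε).sub hint2
  have := integral_Ioi_of_hasDerivAt_of_tendsto' hderiv hdint htend
  rw [integral_sub (integrableOn_exp_neg_div ε hε) hint2] at this
  linarith [this]

lemma integrableOn_alg (a ε : ℝ) (ha : 0 < a) (hε : 0 < ε) :
    IntegrableOn (fun t : ℝ => (1/t) * (a / (t^2 + a^2))) (Ioi ε) := by
  have hmaj : IntegrableOn (fun t : ℝ => a * t ^ (-3 : ℝ)) (Ioi ε) :=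
    (integrableOn_Ioi_rpow_of_lt (by norm_num) hε).const_mul a
  refine hmaj.mono' ?_ ?_
  · refine (ContinuousOn.mul ?_ ?_).aestronglyMeasurable measurableSet_Ioi
    · exact ContinuousOn.div continuousOn_const continuousOn_id
        (fun t ht => ne_of_gt (hε.trans ht))
    · refine ContinuousOn.div continuousOn_const
        ((continuousOn_pow 2).add continuousOn_const) (fun t ht => by positivity)
  · filter_upwards [ae_restrict_mem measurableSet_Ioi] with t ht
    have ht0 : 0 < t := hε.trans ht
    have h1 : (0:ℝ) ≤ (1/t) * (a / (t^2 + a^2)) := by positivity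
    rw [Real.norm_eq_abs, abs_of_nonneg h1]
    rw [Real.rpow_neg ht0.le, (by norm_num : (3:ℝ) = (3:ℕ)), Real.rpow_natCast]
    rw [div_mul_div_comm, one_mul, ← div_eq_mul_inv,
      div_le_div_iff₀ (by positivity) (by positivity)]
    nlinarith [mul_nonneg (mul_nonneg ha.le ht0.le) (sq_nonneg a)]

lemma integral_alg (a ε : ℝ) (ha : 0 < a) (hε : 0 < ε) :
    ∫ t in Ioi ε, (1/t) * (a / (t^2 + a^2))
      = (1/a) * ((1/2) * Real.log (ε^2 + a^2) - Real.log ε) := by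
  set F : ℝ → ℝ := fun t => (1/a) * (Real.log t - (1/2) * Real.log (t^2 + a^2)) with hF
  have hderiv : ∀ x ∈ Ici ε, HasDerivAt F ((1/x) * (a / (x^2 + a^2))) x := by
    intro x hx
    have hx0 : 0 < x := lt_of_lt_of_le hε hx
    have hq : 0 < x^2 + a^2 := by positivity
    have h1 : HasDerivAt Real.log (1/x) x := by
      simpa [one_div] using Real.hasDerivAt_log hx0.ne'
    have h2 : HasDerivAt (fun t : ℝ => t^2 + a^2) (2*x) x := by
      simpa using ((hasDerivAt_pow 2 x).add_const (a^2))
    have h3 : HasDerivAt (fun t : ℝ => Real.log (t^2 + a^2)) ((2*x)/(x^2+a^2)) x := by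
      simpa [div_eq_mul_inv, mul_comm, Function.comp_def] using (Real.hasDerivAt_log hq.ne').comp x h2
    have : HasDerivAt F ((1/a) * (1/x - (1/2) * ((2*x)/(x^2+a^2)))) x :=
      ((h1.sub (h3.const_mul (1/2 : ℝ))).const_mul (1/a : ℝ))
    convert this using 1
    field_simp
    ring
  have htend : Tendsto F atTop (𝓝 0) := by
    have hcomp : Tendsto (fun t : ℝ => a / t) atTop (𝓝 0) :=
      tendsto_const_nhds.div_atTop tendsto_id
    have hcont : ContinuousAt (fun x : ℝ => -(1/(2*a)) * Real.log (1 + x^2)) 0 := by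
      have h5 : ContinuousAt (fun x : ℝ => Real.log (1 + x^2)) 0 := by
        have hc : ContinuousAt (fun x : ℝ => (1:ℝ) + x^2) 0 := by fun_prop
        exact ContinuousAt.comp (x := (0:ℝ)) (g := Real.log)
          (Real.continuousAt_log (by norm_num)) hc
      exact h5.const_mul _
    have hG : Tendsto (fun t : ℝ => -(1/(2*a)) * Real.log (1 + (a/t)^2)) atTop (𝓝 0) := by
      have := hcont.tendsto.comp hcomp
      simpa [Function.comp_def] using this
    refine hG.congr' ?_
    filter_upwards [eventually_gt_atTop (0:ℝ)] with t ht
    have ht2 : (0:ℝ) < t^2 := by positivity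
    rw [hF]
    have h4 : (1:ℝ) + (a/t)^2 = (t^2 + a^2)/t^2 := by field_simp
    rw [h4, Real.log_div (by positivity) ht2.ne', Real.log_pow]
    push_cast
    field_simp
    ring
  have := integral_Ioi_of_hasDerivAt_of_tendsto' hderiv (integrableOn_alg a ε ha hε) htend
  rw [this, hF]
  ring

lemma eps_pos (k : ℕ) : (0:ℝ) < ((k:ℝ)+1)⁻¹ := by positivity

lemma iUnion_Ioi_seq : (⋃ k : ℕ, Ioi (((k:ℝ)+1)⁻¹)) = Ioi (0:ℝ) := by
  ext x
  simp only [mem_iUnion, mem_Ioi]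
  constructor
  · rintro ⟨k, hk⟩
    exact lt_trans (eps_pos k) hk
  · intro hx
    obtain ⟨k, hk⟩ := exists_nat_gt x⁻¹
    refine ⟨k, ?_⟩
    have h1 : x⁻¹ < (k:ℝ) + 1 := hk.trans (lt_add_one _)
    calc ((k:ℝ)+1)⁻¹ < (x⁻¹)⁻¹ := by
          exact inv_strictAnti₀ (by positivity) h1
      _ = x := inv_inv x

lemma tendsto_eps : Tendsto (fun k : ℕ => ((k:ℝ)+1)⁻¹) atTop (𝓝 0) := by
  simpa [one_div] using tendsto_one_div_add_atTop_nhds_zero_nat (𝕜 := ℝ)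

lemma tendsto_E :
    Tendsto (fun k : ℕ => Real.log (((k:ℝ)+1)⁻¹)
        + ∫ t in Ioi (((k:ℝ)+1)⁻¹), Real.exp (-t)/t)
      atTop (𝓝 (-Real.eulerMascheroniConstant)) := by
  have hJ : Tendsto (fun k : ℕ => ∫ t in Ioi (((k:ℝ)+1)⁻¹), Real.log t * Real.exp (-t))
      atTop (𝓝 (-Real.eulerMascheroniConstant)) := by
    have := tendsto_setIntegral_of_monotone (μ := volume)
      (s := fun k : ℕ => Ioi (((k:ℝ)+1)⁻¹))
      (f := fun t : ℝ => Real.log t * Real.exp (-t))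
      (fun k => measurableSet_Ioi)
      (fun i j hij => Ioi_subset_Ioi (by
        apply inv_anti₀ (by positivity)
        have : (i:ℝ) ≤ (j:ℝ) := Nat.cast_le.mpr hij
        linarith))
      (by rw [iUnion_Ioi_seq]; exact integrableOn_log_mul_exp_neg)
    rwa [iUnion_Ioi_seq, integral_log_mul_exp_neg] at this
  have h0 : Tendsto (fun k : ℕ =>
      (1 - Real.exp (-(((k:ℝ)+1)⁻¹))) * Real.log (((k:ℝ)+1)⁻¹)) atTop (𝓝 0) := by
    have hg : Tendsto (fun k : ℕ => Real.log (((k:ℝ)+1)⁻¹) * (((k:ℝ)+1)⁻¹)) atTop (𝓝 0) := by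
      have hmem : Tendsto (fun k : ℕ => ((k:ℝ)+1)⁻¹) atTop (𝓝[>] 0) :=
        tendsto_nhdsWithin_of_tendsto_nhds_of_eventually_within _ tendsto_eps
          (Eventually.of_forall fun k => eps_pos k)
      have h6 := (tendsto_log_mul_rpow_nhdsGT_zero one_pos).comp hmem
      exact h6.congr fun k => by simp [Real.rpow_one]
    refine squeeze_zero_norm' ?_ (by simpa using hg.norm : Tendsto (fun k : ℕ => ‖Real.log (((k:ℝ)+1)⁻¹) * (((k:ℝ)+1)⁻¹)‖) atTop (𝓝 0))
    filter_upwards with k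
    set e := ((k:ℝ)+1)⁻¹ with he
    have he0 : 0 < e := eps_pos k
    have hb1 : 0 ≤ 1 - Real.exp (-e) := by
      have : Real.exp (-e) ≤ 1 := Real.exp_le_one_iff.mpr (by linarith)
      linarith
    have hb2 : 1 - Real.exp (-e) ≤ e := by
      have := Real.add_one_le_exp (-e)
      linarith
    rw [Real.norm_eq_abs, Real.norm_eq_abs, abs_mul, abs_mul, abs_of_nonneg hb1,
      abs_of_nonneg he0.le]
    exact le_of_le_of_eq (mul_le_mul_of_nonneg_right hb2 (abs_nonneg _)) (mul_comm _ _)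
  have := h0.add hJ
  rw [zero_add] at this
  refine this.congr (fun k => ?_)
  rw [ibp_exp_div _ (eps_pos k)]
  ring

theorem kummer_coefficient_integral (n : ℕ) (hn : 0 < n) :
    ∫ t in Set.Ioi (0:ℝ),
        (1/t) * ((2*(n:ℝ)*Real.pi) / (t^2 + 4*(n:ℝ)^2*Real.pi^2)
          - Real.exp (-t) / (2*(n:ℝ)*Real.pi))
      = (1 / (2*(n:ℝ)*Real.pi))
        * (Real.eulerMascheroniConstant + Real.log (2*Real.pi) + Real.log n) := by
  have hn0 : (0:ℝ) < (n:ℝ) := Nat.cast_pos.mpr hn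
  set a : ℝ := 2*(n:ℝ)*Real.pi with ha_def
  have ha : 0 < a := by rw [ha_def]; positivity
  set f : ℝ → ℝ := fun t => (1/t) * (a / (t^2 + a^2) - Real.exp (-t) / a) with hf
  have hgoal_eq : ∀ t : ℝ, (1/t) * (a / (t^2 + 4*(n:ℝ)^2*Real.pi^2) - Real.exp (-t) / a)
      = f t := by
    intro t
    rw [hf]
    have : 4*(n:ℝ)^2*Real.pi^2 = a^2 := by rw [ha_def]; ring
    rw [this]
  rw [show (∫ t in Set.Ioi (0:ℝ),
        (1/t) * (a / (t^2 + 4*(n:ℝ)^2*Real.pi^2) - Real.exp (-t) / a))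
      = ∫ t in Set.Ioi (0:ℝ), f t from integral_congr_ae
        (ae_of_all _ fun t => hgoal_eq t)]
  -- continuity of f on (0, ∞)
  have hcont : ContinuousOn f (Ioi 0) := by
    rw [hf]
    refine ContinuousOn.mul
      (ContinuousOn.div continuousOn_const continuousOn_id fun t ht => ne_of_gt ht) ?_
    refine ContinuousOn.sub
      (ContinuousOn.div continuousOn_const ((continuousOn_pow 2).add continuousOn_const)
        (fun t ht => by positivity)) ?_
    exact ContinuousOn.div
      ((Real.continuous_exp.comp continuous_neg).continuousOn) continuousOn_const
      (fun _ _ => ha.ne')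
  have hmble : AEStronglyMeasurable f volume := by
    rw [hf]
    refine Measurable.aestronglyMeasurable ?_
    refine Measurable.mul (measurable_const.div measurable_id) (Measurable.sub ?_ ?_)
    · exact measurable_const.div ((measurable_id.pow_const 2).add_const _)
    · exact (Real.measurable_exp.comp measurable_neg).div measurable_const
  -- integrability on (0, 1]
  have h01 : IntegrableOn f (Ioc 0 1) := by
    refine Measure.integrableOn_of_bounded (M := 1/a^3 + 1/a)
      (by simp [Real.volume_Ioc]) hmble ?_
    filter_upwards [ae_restrict_mem measurableSet_Ioc] with t ht
    obtain ⟨ht0, ht1⟩ := ht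
    have heq : f t = -t/(a*(t^2+a^2)) + (1 - Real.exp (-t))/(t*a) := by
      rw [hf]; field_simp; ring
    rw [heq, Real.norm_eq_abs]
    have hb1 : 0 ≤ 1 - Real.exp (-t) := by
      have : Real.exp (-t) ≤ 1 := Real.exp_le_one_iff.mpr (by linarith)
      linarith
    have hb2 : 1 - Real.exp (-t) ≤ t := by
      have := Real.add_one_le_exp (-t)
      linarith
    refine (abs_add_le _ _).trans (add_le_add ?_ ?_)
    · rw [abs_div, abs_neg, abs_of_nonneg ht0.le, abs_of_pos (by positivity : (0:ℝ) < a*(t^2+a^2)),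
        div_le_div_iff₀ (by positivity) (by positivity)]
      nlinarith [mul_nonneg (mul_nonneg ha.le ht0.le) (mul_nonneg ht0.le ht0.le),
        mul_nonneg (mul_pos ha (mul_pos ha ha)).le (sub_nonneg.mpr ht1)]
    · rw [abs_div, abs_of_nonneg hb1, abs_of_pos (mul_pos ht0 ha),
        div_le_div_iff₀ (mul_pos ht0 ha) ha]
      nlinarith [mul_le_mul_of_nonneg_right hb2 ha.le]
  -- integrability on (1, ∞)
  have h1i : IntegrableOn f (Ioi 1) := by
    have hmaj : IntegrableOn (fun t : ℝ => a * t^(-3:ℝ) + Real.exp (-t)/a) (Ioi 1) := by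
      refine ((integrableOn_Ioi_rpow_of_lt (by norm_num) one_pos).const_mul a).add ?_
      refine ((exp_neg_integrableOn_Ioi 1 one_pos).div_const a).congr
        (ae_of_all _ fun x => by norm_num)
    refine hmaj.mono' hmble.restrict ?_
    filter_upwards [ae_restrict_mem measurableSet_Ioi] with t ht
    have ht1 : 1 < t := ht
    have ht0 : 0 < t := lt_trans one_pos ht1
    rw [hf, Real.norm_eq_abs]
    simp only []
    rw [mul_sub]
    refine (abs_sub _ _).trans (add_le_add ?_ ?_)
    · rw [abs_of_nonneg (by positivity : (0:ℝ) ≤ 1/t * (a/(t^2+a^2))),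
        Real.rpow_neg ht0.le, (by norm_num : (3:ℝ) = (3:ℕ)), Real.rpow_natCast,
        div_mul_div_comm, one_mul, ← div_eq_mul_inv,
        div_le_div_iff₀ (by positivity) (by positivity)]
      nlinarith [mul_nonneg (mul_nonneg ha.le ht0.le) (sq_nonneg a)]
    · rw [abs_of_nonneg (by positivity : (0:ℝ) ≤ 1/t * (Real.exp (-t)/a)),
        div_mul_div_comm, one_mul, div_le_div_iff₀ (by positivity) (by positivity)]
      nlinarith [mul_pos ht0 ha, Real.exp_pos (-t), mul_le_mul_of_nonneg_left ht1.le
        (mul_nonneg (Real.exp_pos (-t)).le ha.le)]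
  have hfi : IntegrableOn f (Ioi 0) := by
    rw [show Ioi (0:ℝ) = Ioc 0 1 ∪ Ioi 1 from (Ioc_union_Ioi_eq_Ioi zero_le_one).symm]
    exact h01.union h1i
  -- splitting the truncated integral
  have hsplit : ∀ ε : ℝ, 0 < ε → (∫ t in Ioi ε, f t)
      = (1/a) * ((1/2) * Real.log (ε^2+a^2) - Real.log ε)
        - (1/a) * ∫ t in Ioi ε, Real.exp (-t)/t := by
    intro ε hε
    have h1 := integrableOn_alg a ε ha hε
    have h2 : IntegrableOn (fun t : ℝ => (1/t) * (Real.exp (-t)/a)) (Ioi ε) := by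
      refine ((integrableOn_exp_neg_div ε hε).div_const a).congr
        (ae_of_all _ fun t => ?_)
      ring
    have heq : ∀ t ∈ Ioi ε, f t
        = (1/t)*(a/(t^2+a^2)) - (1/t)*(Real.exp (-t)/a) := by
      intro t ht
      rw [hf]; ring
    rw [setIntegral_congr_fun measurableSet_Ioi heq, integral_sub h1 h2,
      integral_alg a ε ha hε]
    congr 1
    rw [show (fun t : ℝ => (1/t) * (Real.exp (-t)/a)) = fun t : ℝ => (1/a) * (Real.exp (-t)/t)
      from funext fun t => by ring, MeasureTheory.integral_const_mul]
  -- limit over the exhausting sequence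
  have hS := tendsto_setIntegral_of_monotone (μ := volume)
    (s := fun k : ℕ => Ioi (((k:ℝ)+1)⁻¹)) (f := f)
    (fun k => measurableSet_Ioi)
    (fun i j hij => Ioi_subset_Ioi (by
      apply inv_anti₀ (by positivity)
      have : (i:ℝ) ≤ (j:ℝ) := Nat.cast_le.mpr hij
      linarith))
    (by rw [iUnion_Ioi_seq]; exact hfi)
  rw [iUnion_Ioi_seq] at hS
  have hA : Tendsto (fun k : ℕ => (1/2) * Real.log (((((k:ℝ)+1)⁻¹))^2 + a^2)) atTop
      (𝓝 (Real.log a)) := by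
    have h1 : Tendsto (fun k : ℕ => ((((k:ℝ)+1)⁻¹))^2 + a^2) atTop (𝓝 ((0:ℝ)^2 + a^2)) :=
      (tendsto_eps.pow 2).add tendsto_const_nhds
    have h2 : ContinuousAt Real.log ((0:ℝ)^2 + a^2) := Real.continuousAt_log (by positivity)
    have h3 := (h2.tendsto.comp h1).const_mul (1/2 : ℝ)
    have h4 : (1/2 : ℝ) * Real.log ((0:ℝ)^2 + a^2) = Real.log a := by
      rw [show (0:ℝ)^2 + a^2 = a^2 by ring, show a^2 = a^2 from rfl, Real.log_pow]
      push_cast; ring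
    rw [h4] at h3
    exact h3
  have hlim : Tendsto (fun k : ℕ => ∫ t in Ioi (((k:ℝ)+1)⁻¹), f t) atTop
      (𝓝 ((1/a) * (Real.log a + Real.eulerMascheroniConstant))) := by
    have hcomb := (hA.sub tendsto_E).const_mul (1/a : ℝ)
    have : (1/a) * (Real.log a - -Real.eulerMascheroniConstant)
        = (1/a) * (Real.log a + Real.eulerMascheroniConstant) := by ring
    rw [this] at hcomb
    refine hcomb.congr (fun k => ?_)
    rw [hsplit _ (eps_pos k)]
    ring
  have hmain := tendsto_nhds_unique hS hlim
  rw [hmain]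
  have hlog : Real.log a = Real.log (2*Real.pi) + Real.log n := by
    rw [ha_def, show 2*(n:ℝ)*Real.pi = (2*Real.pi)*(n:ℝ) by ring,
      Real.log_mul (by positivity) (ne_of_gt hn0)]
  rw [hlog]
  ring
end

section
/- The Euler–Mascheroni constant γ satisfies γ = ∫₀^∞ (1/(1+t) − e^{−t}) · (1/t) dt (Dirichlet's formula). -/
open Real MeasureTheory Set Filter
open scoped Topology

/-- Integrability of `log` on `(0,1]`. -/
lemma integrableOn_log_Ioc : IntegrableOn Real.log (Ioc (0:ℝ) 1) := by
  have hg : IntegrableOn (fun t : ℝ => 2 * t ^ (-(1:ℝ)/2)) (Ioc (0:ℝ) 1) := by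
    have h := (intervalIntegral.intervalIntegrable_rpow' (a := (0:ℝ)) (b := 1)
      (r := -(1:ℝ)/2) (by norm_num))
    rw [intervalIntegrable_iff_integrableOn_Ioc_of_le (zero_le_one' ℝ)] at h
    exact h.const_mul 2
  refine hg.mono' ?_ ?_
  · exact ((Real.continuousOn_log.mono (fun x hx => ne_of_gt hx.1)).aestronglyMeasurable
      measurableSet_Ioc)
  · rw [ae_restrict_iff' measurableSet_Ioc]
    filter_upwards with t ht
    have h0 : (0:ℝ) < t := ht.1
    have h1 : t ≤ 1 := ht.2
    have hlog : Real.log t ≤ 0 := Real.log_nonpos h0.le h1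
    rw [Real.norm_eq_abs, abs_of_nonpos hlog]
    have hs : (0:ℝ) < t ^ ((1:ℝ)/2) := Real.rpow_pos_of_pos h0 _
    have key : -Real.log t = -2 * Real.log (t ^ ((1:ℝ)/2)) := by
      rw [Real.log_rpow h0]; ring
    rw [key]
    have h2 : Real.log (t ^ ((1:ℝ)/2)) ≥ 1 - (t ^ ((1:ℝ)/2))⁻¹ := by
      have := Real.log_le_sub_one_of_pos (inv_pos.mpr hs)
      rw [Real.log_inv] at this
      linarith
    have h3 : (t ^ ((1:ℝ)/2))⁻¹ = t ^ (-(1:ℝ)/2) := by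
      rw [← Real.rpow_neg h0.le]; norm_num
    nlinarith [Real.rpow_pos_of_pos h0 (-(1:ℝ)/2)]

/-- Integrability of `exp (-t) * log t` on `(0, ∞)`. -/
lemma integrable_exp_neg_mul_log :
    IntegrableOn (fun t : ℝ => Real.exp (-t) * Real.log t) (Ioi 0) := by
  rw [← Ioc_union_Ioi_eq_Ioi (zero_le_one' ℝ), integrableOn_union]
  have hmeas : ∀ s : Set ℝ, MeasurableSet s → s ⊆ Ioi 0 →
      AEStronglyMeasurable (fun t : ℝ => Real.exp (-t) * Real.log t) (volume.restrict s) := by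
    intro s hs hsub
    refine ContinuousOn.aestronglyMeasurable ?_ hs
    exact ((Real.continuous_exp.comp continuous_neg).continuousOn.mul
      (Real.continuousOn_log.mono (fun x hx => ne_of_gt (hsub hx))))
  constructor
  · refine (integrableOn_log_Ioc.norm).mono'
      (hmeas _ measurableSet_Ioc (fun x hx => hx.1)) ?_
    rw [ae_restrict_iff' measurableSet_Ioc]
    filter_upwards with t ht
    rw [norm_mul, Real.norm_eq_abs (Real.exp _), abs_of_pos (Real.exp_pos _)]
    have h1 : Real.exp (-t) ≤ 1 := Real.exp_le_one_iff.mpr (by linarith [ht.1.le])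
    calc Real.exp (-t) * ‖Real.log t‖ ≤ 1 * ‖Real.log t‖ := by gcongr
      _ = ‖Real.log t‖ := one_mul _
  · have hG : IntegrableOn (fun t : ℝ => Real.exp (-t) * t ^ ((2:ℝ) - 1)) (Ioi 1) :=
      (Real.GammaIntegral_convergent (by norm_num : (0:ℝ) < 2)).mono_set
        (Ioi_subset_Ioi zero_le_one)
    refine hG.mono' (hmeas _ measurableSet_Ioi (Ioi_subset_Ioi zero_le_one)) ?_
    rw [ae_restrict_iff' measurableSet_Ioi]
    filter_upwards with t ht
    have ht1 : (1:ℝ) ≤ t := le_of_lt ht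
    have h0 : (0:ℝ) < t := lt_of_lt_of_le one_pos ht1
    rw [norm_mul, Real.norm_eq_abs (Real.exp _), abs_of_pos (Real.exp_pos _),
      Real.norm_eq_abs, abs_of_nonneg (Real.log_nonneg ht1)]
    have hlt : Real.log t ≤ t := (Real.log_le_sub_one_of_pos h0).trans (by linarith)
    have : t ^ ((2:ℝ) - 1) = t := by norm_num
    rw [this]
    exact mul_le_mul_of_nonneg_left hlt (Real.exp_pos _).le

/-- Integrability of the Dirichlet integrand on `(0, ∞)`. -/
lemma integrable_dirichlet :
    IntegrableOn (fun t : ℝ => (1/(1+t) - Real.exp (-t)) * (1/t)) (Ioi 0) := by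
  rw [← Ioc_union_Ioi_eq_Ioi (zero_le_one' ℝ), integrableOn_union]
  have hmeas : ∀ s : Set ℝ, MeasurableSet s → s ⊆ Ioi 0 →
      AEStronglyMeasurable (fun t : ℝ => (1/(1+t) - Real.exp (-t)) * (1/t))
        (volume.restrict s) := by
    intro s hs hsub
    refine ContinuousOn.aestronglyMeasurable ?_ hs
    intro x hx
    have hx0 : (0:ℝ) < x := hsub hx
    refine ContinuousWithinAt.mul (ContinuousWithinAt.sub ?_ ?_) ?_
    · exact ((continuousAt_const.div (continuousAt_const.add continuousAt_id)
        (by show (1:ℝ) + x ≠ 0; positivity)).continuousWithinAt)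
    · exact (Real.continuous_exp.comp continuous_neg).continuousWithinAt
    · exact ((continuousAt_const.div continuousAt_id (ne_of_gt hx0)).continuousWithinAt)
  have hbound : ∀ t : ℝ, 0 < t → 0 ≤ 1/(1+t) - Real.exp (-t) ∧
      1/(1+t) - Real.exp (-t) ≤ t^2 := by
    intro t ht
    have h1t : (0:ℝ) < 1 + t := by linarith
    have he : 1 + t ≤ Real.exp t := by linarith [Real.add_one_le_exp t]
    have he' : Real.exp (-t) ≤ 1/(1+t) := by
      rw [Real.exp_neg, one_div, inv_le_inv₀ (Real.exp_pos t) h1t]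
      exact he
    constructor
    · linarith
    · have he2 : 1 - t ≤ Real.exp (-t) := by
        have := Real.add_one_le_exp (-t); linarith
      have : 1/(1+t) - (1 - t) = t^2/(1+t) := by field_simp; ring
      have h4 : t^2/(1+t) ≤ t^2 := by
        rw [div_le_iff₀ h1t]; nlinarith
      linarith
  constructor
  · refine (Integrable.mono' (g := fun _ => (1:ℝ)) ?_
      (hmeas _ measurableSet_Ioc (fun x hx => hx.1)) ?_)
    · exact integrableOn_const measure_Ioc_lt_top.ne
    · rw [ae_restrict_iff' measurableSet_Ioc]
      filter_upwards with t ht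
      have h0 : (0:ℝ) < t := ht.1
      obtain ⟨hb1, hb2⟩ := hbound t h0
      rw [Real.norm_eq_abs, abs_mul, abs_of_nonneg hb1, abs_of_pos (by positivity :
        (0:ℝ) < 1/t)]
      calc (1/(1+t) - Real.exp (-t)) * (1/t) ≤ t^2 * (1/t) := by
            gcongr
        _ = t := by rw [sq, mul_one_div, mul_div_assoc, div_self h0.ne', mul_one]
        _ ≤ 1 := ht.2
  · refine (Integrable.mono' (g := fun t => t ^ (-(2:ℝ)) + Real.exp (-t)) ?_
      (hmeas _ measurableSet_Ioi (Ioi_subset_Ioi zero_le_one)) ?_)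
    · have hrp : IntegrableOn (fun t : ℝ => t ^ (-(2:ℝ))) (Ioi (1:ℝ)) :=
        integrableOn_Ioi_rpow_of_lt (by norm_num) one_pos
      have hex : IntegrableOn (fun t : ℝ => Real.exp (-t)) (Ioi (1:ℝ)) := by
        have h := exp_neg_integrableOn_Ioi (1:ℝ) one_pos
        simpa using h
      exact hrp.add hex
    · rw [ae_restrict_iff' measurableSet_Ioi]
      filter_upwards with t ht
      have ht1 : (1:ℝ) ≤ t := le_of_lt ht
      have h0 : (0:ℝ) < t := lt_of_lt_of_le one_pos ht1
      have h1t : (0:ℝ) < 1 + t := by linarith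
      have hr : t ^ (-(2:ℝ)) = 1/t^2 := by
        rw [Real.rpow_neg h0.le, one_div, show ((2:ℝ) = ((2:ℕ):ℝ)) by norm_num,
          Real.rpow_natCast]
      rw [Real.norm_eq_abs, abs_mul, abs_of_pos (by positivity : (0:ℝ) < 1/t)]
      have habs : |1/(1+t) - Real.exp (-t)| ≤ 1/(1+t) + Real.exp (-t) := by
        have h2 : (0:ℝ) < 1/(1+t) := by positivity
        have h3 : (0:ℝ) < Real.exp (-t) := Real.exp_pos _
        rw [abs_le]; constructor <;> nlinarith
      have e1 : 1/((1+t)*t) ≤ t ^ (-(2:ℝ)) := by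
        rw [hr]
        apply one_div_le_one_div_of_le (by positivity)
        nlinarith
      have e2 : Real.exp (-t) * (1/t) ≤ Real.exp (-t) := by
        have : 1/t ≤ 1 := by rw [div_le_one h0]; exact ht1
        nlinarith [Real.exp_pos (-t)]
      calc |1/(1+t) - Real.exp (-t)| * (1/t) ≤ (1/(1+t) + Real.exp (-t)) * (1/t) := by
            gcongr
        _ = 1/(1+t)*(1/t) + Real.exp (-t) * (1/t) := add_mul _ _ _
        _ = 1/((1+t)*t) + Real.exp (-t) * (1/t) := by rw [one_div_mul_one_div]
        _ ≤ t ^ (-(2:ℝ)) + Real.exp (-t) := by gcongr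

/-- Euler–Mascheroni constant as `-∫ exp(-t) log t`. -/
lemma gamma_eq_neg_integral :
    Real.eulerMascheroniConstant = -∫ t in Ioi (0:ℝ), Real.exp (-t) * Real.log t := by
  have h1 := Complex.hasDerivAt_GammaIntegral (s := 1) (by norm_num)
  have hD : (∫ t in Ioi (0:ℝ), (t:ℂ) ^ ((1:ℂ)-1) * (Real.log t * Real.exp (-t)))
      = ((∫ t in Ioi (0:ℝ), Real.exp (-t) * Real.log t : ℝ) : ℂ) := by
    have hc : ∀ t ∈ Ioi (0:ℝ), (t:ℂ) ^ ((1:ℂ)-1) * (Real.log t * Real.exp (-t))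
        = ((Real.exp (-t) * Real.log t : ℝ) : ℂ) := by
      intro t ht
      rw [sub_self, Complex.cpow_zero, one_mul]
      push_cast
      ring
    rw [setIntegral_congr_fun measurableSet_Ioi hc]
    exact integral_ofReal
  rw [hD] at h1
  have h2 : Complex.Gamma =ᶠ[𝓝 (1:ℂ)] Complex.GammaIntegral := by
    filter_upwards [(Complex.continuous_re.isOpen_preimage _ isOpen_Ioi).mem_nhds
      (by norm_num : (1:ℂ) ∈ Complex.re ⁻¹' Ioi 0)] with s hs
    exact Complex.Gamma_eq_integral hs
  have h3 : HasDerivAt Complex.Gamma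
      ((∫ t in Ioi (0:ℝ), Real.exp (-t) * Real.log t : ℝ) : ℂ) 1 :=
    h1.congr_of_eventuallyEq h2
  have h4 := h3.real_of_complex
  have h5 : (fun x : ℝ => (Complex.Gamma ↑x).re) = Real.Gamma := rfl
  rw [h5] at h4
  rw [Real.eulerMascheroniConstant_eq_neg_deriv, h4.deriv, Complex.ofReal_re]

theorem dirichlet_formula_gamma :
    Real.eulerMascheroniConstant
      = ∫ t in Set.Ioi (0:ℝ), (1/(1+t) - Real.exp (-t)) * (1/t) := by
  set H : ℝ → ℝ := fun t => (1 - Real.exp (-t)) * Real.log t - Real.log (1+t) with hH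
  have hH0 : H 0 = 0 := by simp [hH]
  -- derivative of H on (0,∞)
  have hderiv : ∀ x ∈ Ioi (0:ℝ), HasDerivAt H
      (Real.exp (-x) * Real.log x + (1/(1+x) - Real.exp (-x)) * (1/x)) x := by
    intro x hx
    have hx0 : (0:ℝ) < x := hx
    have h1x : (0:ℝ) < 1 + x := by linarith
    have ha : HasDerivAt (fun t : ℝ => Real.exp (-t)) (-Real.exp (-x)) x := by
      simpa [Function.comp_def] using (Real.hasDerivAt_exp (-x)).comp x ((hasDerivAt_id x).neg)
    have hd1 : HasDerivAt (fun t : ℝ => 1 - Real.exp (-t)) (Real.exp (-x)) x := by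
      simpa using ha.const_sub 1
    have hd2 : HasDerivAt Real.log x⁻¹ x := Real.hasDerivAt_log hx0.ne'
    have hd3 : HasDerivAt (fun t : ℝ => (1 - Real.exp (-t)) * Real.log t)
        (Real.exp (-x) * Real.log x + (1 - Real.exp (-x)) * x⁻¹) x := hd1.mul hd2
    have hd4 : HasDerivAt (fun t : ℝ => Real.log (1+t)) (1+x)⁻¹ x := by
      simpa [Function.comp_def] using (Real.hasDerivAt_log h1x.ne').comp x ((hasDerivAt_id x).const_add 1)
    have := hd3.sub hd4
    refine this.congr_deriv ?_
    field_simp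
    ring
  -- continuity at 0 from the right
  have hA : Tendsto (fun t : ℝ => (1 - Real.exp (-t)) * Real.log t) (𝓝[>] 0) (𝓝 0) := by
    have h := tendsto_log_mul_rpow_nhdsGT_zero one_pos
    have h' : Tendsto (fun t : ℝ => |Real.log t * t|) (𝓝[>] (0:ℝ)) (𝓝 0) := by
      simpa using h.abs
    apply squeeze_zero_norm' ?_ h'
    filter_upwards [self_mem_nhdsWithin] with t ht
    have h0 : (0:ℝ) < t := ht
    have h1 : 0 ≤ 1 - Real.exp (-t) := by
      nlinarith [Real.exp_le_one_iff.mpr (neg_nonpos.mpr h0.le)]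
    have h2 : 1 - Real.exp (-t) ≤ t := by nlinarith [Real.add_one_le_exp (-t)]
    rw [norm_mul, Real.norm_eq_abs, Real.norm_eq_abs, abs_mul, abs_of_nonneg h1,
      abs_of_pos h0, mul_comm]
    gcongr
  have hB : Tendsto (fun t : ℝ => Real.log (1+t)) (𝓝[>] 0) (𝓝 0) := by
    have hc : ContinuousAt (fun t : ℝ => Real.log (1+t)) 0 := by
      have h1 : ContinuousAt (fun t : ℝ => 1 + t) 0 :=
        (continuous_const.add continuous_id).continuousAt
      have h2 : ContinuousAt Real.log ((fun t : ℝ => 1 + t) 0) := by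
        apply Real.continuousAt_log; norm_num
      simpa [Function.comp_def] using h2.comp h1
    have hcw := hc.continuousWithinAt (s := Ioi 0)
    simpa [ContinuousWithinAt] using hcw
  have hcont : ContinuousWithinAt H (Ici 0) 0 := by
    rw [← continuousWithinAt_Ioi_iff_Ici]
    have : Tendsto H (𝓝[>] (0:ℝ)) (𝓝 0) := by simpa using hA.sub hB
    simpa [ContinuousWithinAt, hH0] using this
  -- limit of H at infinity
  have hC : Tendsto (fun t : ℝ => Real.log t - Real.log (1+t)) atTop (𝓝 0) := by
    have hfrac : Tendsto (fun t : ℝ => 1 - 1/(1+t)) atTop (𝓝 1) := by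
      have h1 : Tendsto (fun t : ℝ => 1+t) atTop atTop :=
        tendsto_atTop_add_const_left _ 1 tendsto_id
      have h2 : Tendsto (fun t : ℝ => 1/(1+t)) atTop (𝓝 0) := by
        simpa [one_div, Pi.inv_def] using h1.inv_tendsto_atTop
      simpa using tendsto_const_nhds.sub h2
    have hlog : Tendsto (fun t : ℝ => Real.log (1 - 1/(1+t))) atTop (𝓝 0) := by
      have := (Real.continuousAt_log (x := (1:ℝ)) one_ne_zero).tendsto.comp hfrac
      simpa [Function.comp_def] using this
    apply hlog.congr'
    filter_upwards [eventually_gt_atTop (0:ℝ)] with t ht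
    have h1x : (0:ℝ) < 1 + t := by linarith
    have : 1 - 1/(1+t) = t/(1+t) := by field_simp; ring
    rw [this, Real.log_div ht.ne' h1x.ne']
  have hD2 : Tendsto (fun t : ℝ => Real.exp (-t) * Real.log t) atTop (𝓝 0) := by
    have h := Real.tendsto_pow_mul_exp_neg_atTop_nhds_zero 1
    have h' : Tendsto (fun t : ℝ => |t ^ 1 * Real.exp (-t)|) atTop (𝓝 0) := by
      simpa using h.abs
    apply squeeze_zero_norm' ?_ h'
    filter_upwards [eventually_ge_atTop (1:ℝ)] with t ht
    have h0 : (0:ℝ) < t := lt_of_lt_of_le one_pos ht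
    have hlt : Real.log t ≤ t := (Real.log_le_sub_one_of_pos h0).trans (by linarith)
    rw [norm_mul, Real.norm_eq_abs, Real.norm_eq_abs, abs_of_pos (Real.exp_pos _),
      abs_of_nonneg (Real.log_nonneg ht), abs_mul, pow_one, abs_of_pos h0,
      abs_of_pos (Real.exp_pos _), mul_comm (t) _]
    gcongr
  have hf : Tendsto H atTop (𝓝 0) := by
    have heq : H = fun t : ℝ => (Real.log t - Real.log (1+t)) - Real.exp (-t) * Real.log t := by
      funext t; simp only [hH]; ring
    rw [heq]
    simpa using hC.sub hD2
  -- FTC on (0, ∞)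
  have hint : IntegrableOn (fun t : ℝ =>
      Real.exp (-t) * Real.log t + (1/(1+t) - Real.exp (-t)) * (1/t)) (Ioi 0) :=
    integrable_exp_neg_mul_log.add integrable_dirichlet
  have key := integral_Ioi_of_hasDerivAt_of_tendsto hcont hderiv hint hf
  rw [hH0, sub_zero] at key
  rw [integral_add integrable_exp_neg_mul_log integrable_dirichlet] at key
  rw [gamma_eq_neg_integral]
  linarith
end

section
/- For every real z with 0 ≤ z ≤ 1, ∫₀^z log Γ(x) dx = z(1−z)/2 + (z/2)·log(2π) + z·log Γ(z) − log G(1+z), where G is the Barnes G-function (Alexeiewsky's theorem). -/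
open Real

open Finset Filter MeasureTheory intervalIntegral


noncomputable def wterm (k : ℕ) (x : ℝ) : ℝ :=
  x / ((k:ℝ)+1) - Real.log (1 + x / ((k:ℝ)+1))

lemma wterm_nonneg (k : ℕ) {x : ℝ} (hx : 0 ≤ x) : 0 ≤ wterm k x := by
  have hc : (0:ℝ) < (k:ℝ)+1 := by positivity
  have ht : 0 ≤ x / ((k:ℝ)+1) := by positivity
  have := Real.log_le_sub_one_of_pos (x := 1 + x/((k:ℝ)+1)) (by linarith)
  simp only [wterm]; linarith

lemma wterm_le_sq (k : ℕ) {x : ℝ} (hx : 0 ≤ x) : wterm k x ≤ (x / ((k:ℝ)+1))^2 := by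
  have hc : (0:ℝ) < (k:ℝ)+1 := by positivity
  set t := x / ((k:ℝ)+1) with ht
  have h0 : 0 ≤ t := by positivity
  have h1 : (0:ℝ) < 1 + t := by linarith
  have h2 := Real.log_le_sub_one_of_pos (x := (1+t)⁻¹) (by positivity)
  rw [Real.log_inv] at h2
  have h3 : (1+t)⁻¹ - 1 = -(t/(1+t)) := by field_simp; ring
  rw [h3] at h2
  have h5 : t - t/(1+t) = t^2/(1+t) := by field_simp; ring
  have h6 : t^2/(1+t) ≤ t^2 := div_le_self (by positivity) (by linarith)
  simp only [wterm, ← ht]; linarith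

lemma summable_sq : Summable (fun k : ℕ => (1:ℝ)/((k:ℝ)+1)^2) := by
  have h : Summable (fun n : ℕ => (1:ℝ)/(n:ℝ)^2) := by
    simpa using Real.summable_one_div_nat_pow.mpr one_lt_two
  refine ((summable_nat_add_iff 1).mpr h).congr fun k => ?_
  push_cast; ring

lemma summable_wterm {x : ℝ} (hx : 0 ≤ x) : Summable (fun k => wterm k x) := by
  refine Summable.of_nonneg_of_le (fun k => wterm_nonneg k hx) (fun k => ?_)
    ((summable_sq.mul_left (x^2)))
  refine (wterm_le_sq k hx).trans (le_of_eq ?_)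
  rw [div_pow]; ring

lemma harmonic_cast (n : ℕ) : ((harmonic n : ℚ) : ℝ) = ∑ k ∈ range n, 1/((k:ℝ)+1) := by
  induction n with
  | zero => simp
  | succ n ih => rw [harmonic_succ, Finset.sum_range_succ, ← ih]; push_cast; ring

lemma fac_cast (n : ℕ) : ((n.factorial : ℕ) : ℝ) = ∏ k ∈ range n, ((k:ℝ)+1) := by
  induction n with
  | zero => simp
  | succ m ih =>
      rw [Finset.prod_range_succ, ← ih, Nat.factorial_succ]
      push_cast; ring

lemma log_Gamma_eq {s : ℝ} (hs : 0 < s) :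
    Real.log (Real.Gamma s)
      = -Real.log s - Real.eulerMascheroniConstant * s + ∑' k, wterm k s := by
  have h1 : Tendsto (fun n => Real.log (Real.GammaSeq s n)) atTop
      (nhds (Real.log (Real.Gamma s))) :=
    ((Real.continuousAt_log (Real.Gamma_pos_of_pos hs).ne').tendsto).comp
      (Real.GammaSeq_tendsto_Gamma s)
  have h2 : ∀ n : ℕ, 1 ≤ n → Real.log (Real.GammaSeq s n)
      = -Real.log s - s * (((harmonic n : ℚ) : ℝ) - Real.log n)
        + ∑ k ∈ range n, wterm k s := by
    intro n hn
    have hn0 : (0:ℝ) < n := by exact_mod_cast hn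
    have hppos : ∀ k ∈ range n, (0:ℝ) < s + ((k:ℝ)+1) := fun k _ => by positivity
    have hprod : ∏ j ∈ range (n+1), (s + (j:ℝ))
        = (∏ k ∈ range n, (s + ((k:ℝ)+1))) * s := by
      rw [Finset.prod_range_succ']
      congr 1
      · exact Finset.prod_congr rfl fun k _ => by push_cast; ring
      · simp
    have hP : (0:ℝ) < ∏ k ∈ range n, (s + ((k:ℝ)+1)) := Finset.prod_pos hppos
    have key : Real.log (Real.GammaSeq s n)
        = s * Real.log n + (∑ k ∈ range n, Real.log ((k:ℝ)+1))
          - (Real.log s + ∑ k ∈ range n, Real.log (s + ((k:ℝ)+1))) := by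
      rw [Real.GammaSeq, hprod, Real.log_div (by positivity) (by positivity),
        Real.log_mul (by positivity) (by positivity),
        Real.log_mul hP.ne' hs.ne', Real.log_rpow hn0, fac_cast,
        Real.log_prod (fun k hk => by positivity),
        Real.log_prod (fun k hk => (hppos k hk).ne')]
      ring
    have hw : ∑ k ∈ range n, wterm k s
        = s * ∑ k ∈ range n, 1/((k:ℝ)+1)
          - ((∑ k ∈ range n, Real.log (s + ((k:ℝ)+1)))
             - ∑ k ∈ range n, Real.log ((k:ℝ)+1)) := by
      rw [← Finset.sum_sub_distrib, Finset.mul_sum, ← Finset.sum_sub_distrib]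
      refine Finset.sum_congr rfl fun k _ => ?_
      have hc : (0:ℝ) < (k:ℝ)+1 := by positivity
      rw [wterm, show (1 + s/((k:ℝ)+1)) = (s + ((k:ℝ)+1))/((k:ℝ)+1) by field_simp; ring,
        Real.log_div (by positivity) hc.ne']
      field_simp
    rw [key, harmonic_cast, hw]; ring
  have h3 : Tendsto (fun n : ℕ => -Real.log s
        - s * (((harmonic n : ℚ) : ℝ) - Real.log n) + ∑ k ∈ range n, wterm k s)
      atTop (nhds (-Real.log s - Real.eulerMascheroniConstant * s + ∑' k, wterm k s)) := by
    have ht := (Real.tendsto_harmonic_sub_log.const_mul s)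
    have := (tendsto_const_nhds (x := -Real.log s)).sub ht
    have h4 := this.add (summable_wterm hs.le).hasSum.tendsto_sum_nat
    rw [mul_comm] at h4
    exact h4
  refine tendsto_nhds_unique h1 (h3.congr' ?_)
  filter_upwards [eventually_ge_atTop 1] with n hn
  exact (h2 n hn).symm


lemma intInt_log {z : ℝ} (h0 : 0 ≤ z) (h1 : z ≤ 1) :
    IntervalIntegrable Real.log volume 0 z := by
  rw [intervalIntegrable_iff_integrableOn_Ioc_of_le h0]
  have hg : IntegrableOn (fun x : ℝ => 2 * x ^ (-(1:ℝ)/2)) (Set.Ioc 0 z) volume := by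
    have := (intervalIntegral.intervalIntegrable_rpow' (a := 0) (b := z)
      (r := -(1:ℝ)/2) (by norm_num))
    exact ((intervalIntegrable_iff_integrableOn_Ioc_of_le h0).mp this).const_mul 2
  refine hg.mono' Real.measurable_log.aestronglyMeasurable ?_
  filter_upwards [ae_restrict_mem measurableSet_Ioc] with x hx
  have hx0 : 0 < x := hx.1
  have hx1 : x ≤ 1 := hx.2.trans h1
  have hlog : Real.log x ≤ 0 := Real.log_nonpos hx0.le hx1
  rw [Real.norm_eq_abs, abs_of_nonpos hlog]
  have h2 : Real.log (x ^ ((1:ℝ)/2)) = (1:ℝ)/2 * Real.log x := Real.log_rpow hx0 _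
  have h3 := Real.log_le_sub_one_of_pos (x := (x ^ ((1:ℝ)/2))⁻¹) (by positivity)
  rw [Real.log_inv, h2] at h3
  have h4 : (x ^ ((1:ℝ)/2))⁻¹ = x ^ (-(1:ℝ)/2) := by
    rw [← Real.rpow_neg hx0.le]; norm_num
  rw [h4] at h3
  have h5 : (0:ℝ) ≤ x ^ (-(1:ℝ)/2) := Real.rpow_nonneg hx0.le _
  linarith

lemma integral_log0 {z : ℝ} (hz : 0 < z) (h1 : z ≤ 1) :
    ∫ x in (0:ℝ)..z, Real.log x = z * Real.log z - z := by
  have hres := intervalIntegral.integral_eq_sub_of_hasDeriv_right_of_le hz.le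
    (f := fun x => x * Real.log x - x) (f' := Real.log)
    ((Real.continuous_mul_log.sub continuous_id).continuousOn)
    (fun x hx => by
      have h : HasDerivAt (fun x => x * Real.log x - x) (Real.log x) x := by
        have := (Real.hasDerivAt_mul_log (ne_of_gt hx.1)).sub (hasDerivAt_id x)
        exact this.congr_deriv (by ring)
      exact h.hasDerivWithinAt)
    (intInt_log hz.le h1)
  rw [hres]; simp

lemma continuousOn_wterm (k : ℕ) {z : ℝ} (hz : 0 ≤ z) :
    ContinuousOn (wterm k) (Set.uIcc 0 z) := by
  rw [Set.uIcc_of_le hz]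
  refine ((continuous_id.div_const _).continuousOn).sub
    (ContinuousOn.log ((continuous_const.add (continuous_id.div_const _)).continuousOn)
      fun x hx => ?_)
  have hx0 : (0:ℝ) ≤ x := hx.1
  have : (0:ℝ) < (k:ℝ)+1 := by positivity
  positivity

lemma integral_wterm (k : ℕ) {z : ℝ} (hz : 0 ≤ z) :
    ∫ x in (0:ℝ)..z, wterm k x
      = z^2/(2*(((k:ℝ)+1))) - (((k:ℝ)+1)+z) * Real.log (1 + z/((k:ℝ)+1)) + z := by
  have hc : (0:ℝ) < (k:ℝ)+1 := by positivity
  set c : ℝ := (k:ℝ)+1 with hcdef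
  have hderiv : ∀ x ∈ Set.uIcc (0:ℝ) z,
      HasDerivAt (fun x => x^2/(2*c) - (c+x)*Real.log (1+x/c) + x) (wterm k x) x := by
    intro x hx
    rw [Set.uIcc_of_le hz] at hx
    have hx0 : 0 ≤ x := hx.1
    have h1c : 0 < 1 + x/c := by positivity
    have h1 : HasDerivAt (fun x : ℝ => 1 + x/c) (1/c) x := by
      simpa using ((hasDerivAt_id x).div_const c).const_add 1
    have h2 : HasDerivAt (fun x => Real.log (1+x/c)) ((1/c)/(1+x/c)) x := h1.log h1c.ne'
    have h3 : HasDerivAt (fun x => (c+x)*Real.log (1+x/c))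
        (1 * Real.log (1+x/c) + (c+x)*((1/c)/(1+x/c))) x :=
      ((hasDerivAt_id x).const_add c).mul h2
    have h5 := (((hasDerivAt_pow 2 x).div_const (2*c)).sub h3).add (hasDerivAt_id x)
    refine h5.congr_deriv ?_
    rw [wterm, ← hcdef]
    field_simp
    ring
  rw [intervalIntegral.integral_eq_sub_of_hasDerivAt hderiv
    ((continuousOn_wterm k hz).intervalIntegrable)]
  simp [Real.log_one]

lemma continuousOn_W : ContinuousOn (fun x => ∑' k, wterm k x) (Set.Icc (0:ℝ) 1) := by
  refine continuousOn_tsum (fun k => ((continuousOn_wterm k zero_le_one).mono (by rw [Set.uIcc_of_le zero_le_one]))) summable_sq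
    (fun k x hx => ?_)
  rw [Real.norm_eq_abs, abs_of_nonneg (wterm_nonneg k hx.1)]
  refine (wterm_le_sq k hx.1).trans ?_
  rw [div_pow]
  gcongr
  nlinarith [hx.1, hx.2]

/-- The logarithm of the Barnes G-function via its Weierstrass product:
`G(1+w) = (2π)^{w/2} exp(-(w + w²(1+γ))/2) ∏_{k=1}^∞ (1+w/k)^k e^{w²/(2k) - w}`,
so `logBarnesG z` is `log G(z)` for real `z > 0` (with `w = z - 1`). -/
noncomputable def logBarnesG (z : ℝ) : ℝ :=
  (z-1)/2 * Real.log (2*Real.pi)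
    - ((z-1) + (z-1)^2 * (1 + Real.eulerMascheroniConstant)) / 2
    + ∑' k : ℕ, (((k:ℝ)+1) * Real.log (1 + (z-1)/((k:ℝ)+1))
        + (z-1)^2 / (2*((k:ℝ)+1)) - (z-1))

theorem alexeiewsky (z : ℝ) (h0 : 0 ≤ z) (h1 : z ≤ 1) :
    ∫ x in (0:ℝ)..z, Real.log (Real.Gamma x)
      = z*(1-z)/2 + (z/2) * Real.log (2*Real.pi)
        + z * Real.log (Real.Gamma z) - logBarnesG (1+z) := by
  rcases h0.eq_or_lt with rfl | hz
  · simp [logBarnesG]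
  -- main case 0 < z
  have heq : Set.EqOn (fun x => Real.log (Real.Gamma x))
      (fun x => -Real.log x - Real.eulerMascheroniConstant * x + ∑' k, wterm k x)
      (Set.uIcc 0 z) := by
    intro x hx
    rw [Set.uIcc_of_le h0] at hx
    rcases hx.1.eq_or_lt with rfl | hx0
    · simp [Real.Gamma_zero, Real.log_zero, wterm]
    · exact log_Gamma_eq hx0
  rw [intervalIntegral.integral_congr heq]
  have hIlog : IntervalIntegrable Real.log volume 0 z := intInt_log h0 h1
  have hIid : IntervalIntegrable (fun x => Real.eulerMascheroniConstant * x) volume 0 z :=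
    (continuous_const.mul continuous_id).intervalIntegrable _ _
  have hIF : IntervalIntegrable (fun x => ∑' k, wterm k x) volume 0 z := by
    apply ContinuousOn.intervalIntegrable
    apply continuousOn_W.mono
    rw [Set.uIcc_of_le h0]
    exact Set.Icc_subset_Icc le_rfl h1
  have hI0 : IntervalIntegrable (fun x => -Real.log x) volume 0 z := hIlog.neg
  have hI1 : IntervalIntegrable (fun x => -Real.log x - Real.eulerMascheroniConstant * x)
      volume 0 z := hI0.sub hIid
  rw [intervalIntegral.integral_add hI1 hIF,
    intervalIntegral.integral_sub hI0 hIid, intervalIntegral.integral_neg,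
    integral_log0 hz h1, intervalIntegral.integral_const_mul, integral_id]
  -- integrability of each wterm on Ioc
  have hWint : ∀ k : ℕ, IntegrableOn (wterm k) (Set.Ioc 0 z) volume := fun k =>
    (intervalIntegrable_iff_integrableOn_Ioc_of_le h0).mp
      ((continuousOn_wterm k h0).intervalIntegrable)
  have hbound : ∀ k : ℕ, ∫ x in Set.Ioc 0 z, ‖wterm k x‖ ≤ z * (1/((k:ℝ)+1)^2) := by
    intro k
    have hmono : ∫ x in Set.Ioc 0 z, ‖wterm k x‖
        ≤ ∫ _x in Set.Ioc 0 z, (1/((k:ℝ)+1)^2) := by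
      refine setIntegral_mono_on (hWint k).norm (integrableOn_const ?_)
        measurableSet_Ioc (fun x hx => ?_)
      · rw [Real.volume_Ioc]; exact ENNReal.ofReal_ne_top
      · rw [Real.norm_eq_abs, abs_of_nonneg (wterm_nonneg k hx.1.le)]
        refine (wterm_le_sq k hx.1.le).trans ?_
        rw [div_pow]
        gcongr
        nlinarith [hx.1.le, hx.2.trans h1]
    refine hmono.trans (le_of_eq ?_)
    rw [setIntegral_const, Real.volume_real_Ioc, smul_eq_mul,
      max_eq_left (by linarith)]
    ring
  have hsumnorm : Summable (fun k => ∫ x in Set.Ioc 0 z, ‖wterm k x‖) := by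
    refine Summable.of_nonneg_of_le
      (fun k => integral_nonneg fun x => norm_nonneg _) hbound
      (summable_sq.mul_left z)
  have hswap := MeasureTheory.integral_tsum_of_summable_integral_norm
    (μ := volume.restrict (Set.Ioc 0 z)) hWint hsumnorm
  have hFval : ∫ x in (0:ℝ)..z, (∑' k, wterm k x)
      = ∑' k : ℕ, (z^2/(2*(((k:ℝ)+1))) - (((k:ℝ)+1)+z) * Real.log (1 + z/((k:ℝ)+1)) + z) := by
    rw [intervalIntegral.integral_of_le h0, ← hswap]
    refine tsum_congr fun k => ?_
    rw [← intervalIntegral.integral_of_le h0, integral_wterm k h0]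
  rw [hFval]
  have hf : Summable (fun k => wterm k z) := summable_wterm h0
  have ht2 : Summable (fun k : ℕ =>
      z^2/(2*(((k:ℝ)+1))) - (((k:ℝ)+1)+z) * Real.log (1 + z/((k:ℝ)+1)) + z) := by
    have hs := (MeasureTheory.hasSum_integral_of_summable_integral_norm
      (μ := volume.restrict (Set.Ioc 0 z)) hWint hsumnorm).summable
    refine hs.congr fun k => ?_
    rw [← intervalIntegral.integral_of_le h0, integral_wterm k h0]
  have hg : Summable (fun k : ℕ =>
      ((k:ℝ)+1) * Real.log (1 + z/((k:ℝ)+1)) + z^2/(2*((k:ℝ)+1)) - z) := by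
    refine ((hf.mul_left z).sub ht2).congr fun k => ?_
    have hk : ((k:ℝ)+1) ≠ 0 := by positivity
    simp only [wterm]
    field_simp
    ring
  have key : (∑' k : ℕ, (z^2/(2*(((k:ℝ)+1))) - (((k:ℝ)+1)+z) * Real.log (1 + z/((k:ℝ)+1)) + z))
      = z * (∑' k, wterm k z)
        - ∑' k : ℕ, (((k:ℝ)+1) * Real.log (1 + z/((k:ℝ)+1)) + z^2/(2*((k:ℝ)+1)) - z) := by
    rw [← tsum_mul_left, ← Summable.tsum_sub (hf.mul_left z) hg]
    refine tsum_congr fun k => ?_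
    have hk : ((k:ℝ)+1) ≠ 0 := by positivity
    simp only [wterm]
    field_simp
    ring
  rw [key, log_Gamma_eq hz, logBarnesG]
  simp only [add_sub_cancel_left]
  ring
end

section
/- log A = (log 2)/36 + (γ + log(2π))/12 + (2/(3π²))·∑_{n=0}^∞ log(2n+1)/(2n+1)², where A is the Glaisher–Kinkelin constant and γ the Euler–Mascheroni constant. -/
open Real

open Complex LSeries in
lemma aux_term_eq (n : ℕ) :
    LSeries.term (LSeries.logMul 1) 2 n = ((Real.log n / (n:ℝ)^2 : ℝ) : ℂ) := by
  rcases eq_or_ne n 0 with rfl | hn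
  · simp [LSeries.term]
  · rw [LSeries.term_of_ne_zero hn]
    simp only [LSeries.logMul, Pi.one_apply, mul_one]
    rw [← Complex.natCast_log, show (2:ℂ) = ((2:ℕ):ℂ) from by norm_num, cpow_natCast]
    push_cast
    ring

lemma aux_abs : LSeries.abscissaOfAbsConv 1 < (2:ℂ).re := by
  rw [LSeries.abscissaOfAbsConv_one]
  simp only [Complex.re_ofNat]
  exact_mod_cast one_lt_two

lemma aux_summable : Summable (fun n : ℕ => Real.log n / (n:ℝ)^2) := by
  have h : LSeriesSummable (LSeries.logMul 1) 2 :=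
    LSeriesSummable_logMul_of_lt_re aux_abs
  rw [LSeriesSummable] at h
  rw [← Complex.summable_ofReal]
  exact h.congr aux_term_eq

lemma aux_deriv_two :
    deriv riemannZeta 2 = -((∑' n : ℕ, Real.log n / (n:ℝ)^2 : ℝ) : ℂ) := by
  have hmem : {s : ℂ | 1 < s.re} ∈ nhds (2:ℂ) :=
    (isOpen_lt continuous_const Complex.continuous_re).mem_nhds (by norm_num)
  have heq : (LSeries 1) =ᶠ[nhds (2:ℂ)] riemannZeta := by
    filter_upwards [hmem] with s hs using LSeries_one_eq_riemannZeta hs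
  rw [← heq.deriv_eq, LSeries_deriv aux_abs]
  congr 1
  rw [LSeries, Complex.ofReal_tsum]
  exact tsum_congr aux_term_eq

open Complex in
lemma aux_zeta_deriv_neg_one :
    deriv riemannZeta (-1) =
      (((1 - Real.eulerMascheroniConstant - Real.log (2*π))/12
        - (∑' n : ℕ, Real.log n / (n:ℝ)^2)/(2*π^2) : ℝ) : ℂ) := by
  have hπ : (π:ℂ) ≠ 0 := Complex.ofReal_ne_zero.mpr Real.pi_ne_zero
  have h2πne : (2*(π:ℂ)) ≠ 0 := by simp [Real.pi_ne_zero, Complex.ofReal_ne_zero]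
  have hA : HasDerivAt (fun s : ℂ => (2*(π:ℂ))^(-s))
      ((2*(π:ℂ))^(-(2:ℂ)) * Complex.log (2*(π:ℂ)) * (-1)) 2 :=
    (hasDerivAt_neg (2:ℂ)).const_cpow (Or.inl h2πne)
  have hB : HasDerivAt Complex.Gamma ((1:ℂ) - (Real.eulerMascheroniConstant:ℂ)) 2 := by
    have h := Complex.hasDerivAt_Gamma_nat 1
    norm_num [harmonic_succ] at h
    convert h using 1
    ring
  have hg0 : HasDerivAt (fun s : ℂ => (π:ℂ)*s/2) ((π:ℂ)/2) 2 := by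
    simpa using ((hasDerivAt_id (2:ℂ)).const_mul (π:ℂ)).div_const 2
  have hC : HasDerivAt (fun s : ℂ => Complex.cos ((π:ℂ)*s/2)) 0 2 := by
    have h := hg0.ccos
    have hs : Complex.sin ((π:ℂ)*2/2) = 0 := by
      rw [show (π:ℂ)*2/2 = (π:ℂ) by ring, Complex.sin_pi]
    simpa [hs] using h
  have hZ2 : HasDerivAt riemannZeta (deriv riemannZeta 2) 2 :=
    (differentiableAt_riemannZeta (by norm_num)).hasDerivAt
  have hF := (((hA.const_mul 2).mul hB).mul hC).mul hZ2
  have hg : HasDerivAt riemannZeta (deriv riemannZeta (-1)) (1 - 2 : ℂ) := by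
    rw [show (1 - 2 : ℂ) = -1 by norm_num]
    exact (differentiableAt_riemannZeta (by norm_num)).hasDerivAt
  have hFd := hg.comp (2:ℂ) ((hasDerivAt_id (2:ℂ)).const_sub 1)
  have hmem : {s : ℂ | 1 < s.re} ∈ nhds (2:ℂ) :=
    (isOpen_lt continuous_const Complex.continuous_re).mem_nhds (by norm_num)
  have heq : (fun s : ℂ => riemannZeta (1 - s)) =ᶠ[nhds (2:ℂ)]
      (fun s : ℂ => 2 * (2*(π:ℂ))^(-s) * Complex.Gamma s * Complex.cos ((π:ℂ)*s/2)
        * riemannZeta s) := by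
    filter_upwards [hmem] with s hs
    refine riemannZeta_one_sub (fun n => ?_) (fun h => by rw [h] at hs; simp at hs)
    intro h
    rw [h] at hs
    simp only [Set.mem_setOf_eq, Complex.neg_re, Complex.natCast_re] at hs
    have := n.cast_nonneg (α := ℝ)
    linarith
  have key := (hFd.congr_of_eventuallyEq heq.symm).unique hF
  have hGamma2 : Complex.Gamma 2 = 1 := by
    simpa using Complex.Gamma_nat_eq_factorial 1
  have hcos : Complex.cos ((π:ℂ)*2/2) = -1 := by
    rw [show (π:ℂ)*2/2 = (π:ℂ) by ring, Complex.cos_pi]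
  have hc : (2*(π:ℂ))^(-(2:ℂ)) = ((1/(4*π^2) : ℝ) : ℂ) := by
    rw [show (-(2:ℂ)) = -((2:ℕ):ℂ) by norm_num, cpow_neg, cpow_natCast]
    push_cast
    field_simp
    ring
  have hlog : Complex.log (2*(π:ℂ)) = ((Real.log (2*π) : ℝ) : ℂ) := by
    rw [show (2*(π:ℂ)) = ((2*π : ℝ) : ℂ) by push_cast; ring,
      ← Complex.ofReal_log (by positivity)]
  simp only [Pi.mul_apply] at key
  rw [hGamma2, hcos, riemannZeta_two, aux_deriv_two, hc, hlog] at key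
  set T : ℝ := ∑' n : ℕ, Real.log n / (n:ℝ)^2 with hTdef
  calc deriv riemannZeta (-1) = (deriv riemannZeta (-1) * -1) * -1 := by ring
    _ = _ := by
        rw [key]
        norm_cast
        field_simp [Real.pi_ne_zero]
        push_cast [Int.cast_negSucc]
        ring

lemma aux_odd_sum :
    ∑' n : ℕ, Real.log (2*(n:ℝ)+1) / (2*(n:ℝ)+1)^2
      = 3/4 * (∑' n : ℕ, Real.log n / (n:ℝ)^2) - π^2 * Real.log 2 / 24 := by
  set g : ℕ → ℝ := fun n => Real.log n / (n:ℝ)^2 with hg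
  have he : Summable (fun k => g (2*k)) :=
    aux_summable.comp_injective (mul_right_injective₀ two_ne_zero)
  have ho : Summable (fun k => g (2*k+1)) :=
    aux_summable.comp_injective (fun a b h => by omega)
  have hsplit : (∑' k, g (2*k)) + ∑' k, g (2*k+1) = ∑' n, g n :=
    tsum_even_add_odd he ho
  have heven : ∀ k : ℕ, g (2*k) = (Real.log 2 * (1/(k:ℝ)^2) + g k)/4 := by
    intro k
    rcases eq_or_ne k 0 with rfl | hk
    · simp [hg]
    · have hk' : (k:ℝ) ≠ 0 := Nat.cast_ne_zero.mpr hk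
      simp only [hg]
      push_cast
      rw [Real.log_mul two_ne_zero hk']
      have h1 : ((2:ℝ)*(k:ℝ))^2 ≠ 0 := pow_ne_zero _ (mul_ne_zero two_ne_zero hk')
      have h2 : ((k:ℝ))^2 ≠ 0 := pow_ne_zero _ hk'
      rw [div_eq_div_iff h1 (by norm_num)]
      field_simp
      ring
  have heval : (∑' k, g (2*k)) = (Real.log 2 * (π^2/6) + ∑' n, g n)/4 := by
    rw [tsum_congr heven, tsum_div_const,
      Summable.tsum_add (hasSum_zeta_two.mul_left (Real.log 2)).summable aux_summable,
      (hasSum_zeta_two.mul_left (Real.log 2)).tsum_eq]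
  have hodd : (∑' n : ℕ, Real.log (2*(n:ℝ)+1) / (2*(n:ℝ)+1)^2) = ∑' k, g (2*k+1) := by
    refine tsum_congr fun k => ?_
    simp only [hg]
    push_cast
    ring
  have h2 : (∑' k, g (2*k+1)) = (∑' n, g n) - (∑' k, g (2*k)) := by
    rw [← hsplit]; ring
  rw [hodd, h2, heval]
  ring

/-- The logarithm of the Glaisher–Kinkelin constant, `log A = 1/12 - ζ'(-1)`. -/
noncomputable def logGlaisher : ℝ := 1/12 - (deriv riemannZeta (-1)).re

theorem logGlaisher_series :
    logGlaisher = Real.log 2 / 36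
      + (Real.eulerMascheroniConstant + Real.log (2*Real.pi)) / 12
      + (2 / (3*Real.pi^2))
          * ∑' n : ℕ, Real.log (2*(n:ℝ)+1) / (2*(n:ℝ)+1)^2 := by
  rw [logGlaisher, aux_zeta_deriv_neg_one, Complex.ofReal_re, aux_odd_sum]
  field_simp [Real.pi_ne_zero]
  ring
end
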